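/- arXiv:1605.06220 — 3 statements merged into one kernel-verified Lean document; each statement's English description precedes it below -/
import Mathlib

section
/- Let (M_t) be a super-martingale adapted to a filtration with M_0 = 0 and differences bounded by |M_{t+1} − M_t| ≤ H η_t for constants H > 0 and a positive sequence (η_t) satisfying Σ η_t² < ∞ and (Σ_{s=0}^{t-1} η_s)/√(log t) → ∞. Then almost surely, limsup_{t→∞} M_t/(Σ_{s=0}^{t-1} η_s) ≤ 0. -/
open Filter Finset MeasureTheory
open Topology

section aux
variable {Ω : Type*} {mΩ : MeasurableSpace Ω} {μ : Measure Ω} [IsProbabilityMeasure μ]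
  (𝒢 : Filtration ℕ mΩ)

theorem aux_conv (M : ℕ → Ω → ℝ) (hM : Supermartingale M 𝒢 μ)
    (hM0 : ∀ ω, M 0 ω = 0) (H : ℝ) (hH : 0 < H) (η : ℕ → ℝ) (hηpos : ∀ t, 0 < η t)
    (hdiff : ∀ t, ∀ ω, |M (t + 1) ω - M t ω| ≤ H * η t)
    (hsq : Summable fun t => (η t) ^ 2) :
    ∀ᵐ ω ∂μ, ∃ c, Tendsto (fun n => martingalePart M 𝒢 μ n ω) atTop (𝓝 c) := by
  have hint : ∀ n, Integrable (M n) μ := hM.integrable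
  set d : ℕ → Ω → ℝ := fun i => M (i + 1) - M i - μ[M (i + 1) - M i|𝒢 i] with hd
  set N : ℕ → Ω → ℝ := martingalePart M 𝒢 μ with hNdef
  have hNmart : Martingale N 𝒢 μ := martingale_martingalePart hM.stronglyAdapted hint
  have hdint : ∀ i, Integrable (d i) μ := fun i =>
    ((hint _).sub (hint _)).sub integrable_condExp
  -- increment bound
  have hdbdd : ∀ i, ∀ᵐ ω ∂μ, |d i ω| ≤ 2 * (H * η i) := by
    intro i
    have hR : (0:ℝ) ≤ H * η i := le_of_lt (mul_pos hH (hηpos i))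
    set g : Ω → ℝ := μ[M (i + 1) - M i|𝒢 i] with hg
    have h1 : ∀ᵐ ω ∂μ, |(M (i + 1) - M i) ω| ≤ ((⟨H * η i, hR⟩ : NNReal) : ℝ) := by
      refine Eventually.of_forall fun ω => ?_
      simpa using hdiff i ω
    have h2 := ae_bdd_condExp_of_ae_bdd (m := 𝒢 i) h1
    filter_upwards [h2] with ω hω
    have h3 : |M (i + 1) ω - M i ω| ≤ H * η i := hdiff i ω
    have h4 : |g ω| ≤ H * η i := by exact hω
    have h5 : d i ω = M (i + 1) ω - M i ω - g ω := by simp [hd, hg]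
    rw [h5]
    calc |M (i + 1) ω - M i ω - g ω| ≤ |M (i + 1) ω - M i ω| + |g ω| := abs_sub _ _
      _ ≤ H * η i + H * η i := add_le_add h3 h4
      _ = 2 * (H * η i) := by ring
  -- N as sum of d
  have hNsum : ∀ n ω, N n ω = ∑ i ∈ Finset.range n, d i ω := by
    intro n ω
    rw [hNdef, martingalePart_eq_sum]
    simp [hM0 ω, hd]
  have hNsucc : ∀ n ω, N (n + 1) ω = N n ω + d n ω := by
    intro n ω
    rw [hNsum, hNsum, Finset.sum_range_succ]
  -- measurability of N
  have hNmeas : ∀ n, StronglyMeasurable[𝒢 n] (N n) := stronglyAdapted_martingalePart hM.stronglyAdapted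
  have hNmeas' : ∀ n, AEStronglyMeasurable (N n) μ :=
    fun n => ((hNmeas n).mono (𝒢.le n)).aestronglyMeasurable
  -- a.e. bound on N
  have hNbdd : ∀ n, ∀ᵐ ω ∂μ, |N n ω| ≤ ∑ i ∈ Finset.range n, 2 * (H * η i) := by
    intro n
    filter_upwards [ae_all_iff.2 hdbdd] with ω hω
    rw [hNsum]
    exact (Finset.abs_sum_le_sum_abs _ _).trans (Finset.sum_le_sum fun i _ => hω i)
  -- integrability of products
  have hNdint : ∀ n, Integrable (fun ω => N n ω * d n ω) μ := by
    intro n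
    refine (hdint n).bdd_mul (c := ∑ i ∈ Finset.range n, 2 * (H * η i)) (hNmeas' n) ?_
    filter_upwards [hNbdd n] with ω hω
    simpa [Real.norm_eq_abs] using hω
  have hsqint : ∀ n, Integrable (fun ω => (d n ω) ^ 2) μ := by
    intro n
    have : Integrable (fun ω => d n ω * d n ω) μ := by
      refine (hdint n).bdd_mul (c := 2 * (H * η n)) ((hdint n).aestronglyMeasurable) ?_
      filter_upwards [hdbdd n] with ω hω
      simpa [Real.norm_eq_abs] using hω
    simpa [pow_two] using this
  have hNsqint : ∀ n, Integrable (fun ω => (N n ω) ^ 2) μ := by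
    intro n
    have : Integrable (fun ω => N n ω * N n ω) μ := by
      refine Integrable.bdd_mul (c := ∑ i ∈ Finset.range n, 2 * (H * η i)) ?_ (hNmeas' n) ?_
      · exact hNmart.integrable n
      · filter_upwards [hNbdd n] with ω hω
        simpa [Real.norm_eq_abs] using hω
    simpa [pow_two] using this
  -- conditional expectation of d is zero
  have hcond0 : ∀ n, μ[d n|𝒢 n] =ᵐ[μ] 0 := by
    intro n
    have h1 : μ[d n|𝒢 n] =ᵐ[μ]
        μ[M (n + 1) - M n|𝒢 n] - μ[μ[M (n + 1) - M n|𝒢 n]|𝒢 n] :=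
      condExp_sub ((hint _).sub (hint _)) integrable_condExp (𝒢 n)
    have h2 : μ[μ[M (n + 1) - M n|𝒢 n]|𝒢 n] = μ[M (n + 1) - M n|𝒢 n] :=
      condExp_of_stronglyMeasurable (𝒢.le n) stronglyMeasurable_condExp integrable_condExp
    filter_upwards [h1] with ω hω
    simp only [hω, h2, Pi.sub_apply, sub_self, Pi.zero_apply]
  -- cross term vanishes
  have hcross : ∀ n, ∫ ω, N n ω * d n ω ∂μ = 0 := by
    intro n
    have hmul : μ[(fun ω => N n ω * d n ω)|𝒢 n] =ᵐ[μ] fun ω => N n ω * (μ[d n|𝒢 n]) ω := by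
      have := condExp_mul_of_stronglyMeasurable_left (hNmeas n)
        (by simpa [Pi.mul_def] using hNdint n) (hdint n)
      simpa [Pi.mul_def] using this
    have h0 : μ[(fun ω => N n ω * d n ω)|𝒢 n] =ᵐ[μ] 0 := by
      filter_upwards [hmul, hcond0 n] with ω h1 h2
      simp [h1, h2]
    calc ∫ ω, N n ω * d n ω ∂μ = ∫ ω, (μ[(fun ω => N n ω * d n ω)|𝒢 n]) ω ∂μ :=
          (integral_condExp (𝒢.le n)).symm
      _ = ∫ ω, (0:ℝ) ∂μ := integral_congr_ae h0
      _ = 0 := integral_zero _ _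
  -- L² bound by induction
  have hL2 : ∀ n, ∫ ω, (N n ω) ^ 2 ∂μ ≤ ∑ i ∈ Finset.range n, (2 * (H * η i)) ^ 2 := by
    intro n
    induction n with
    | zero =>
      simp [hNsum]
    | succ n ih =>
      have hptw : ∀ ω, (N (n + 1) ω) ^ 2 =
          (N n ω) ^ 2 + (2 * (N n ω * d n ω) + (d n ω) ^ 2) := by
        intro ω; rw [hNsucc]; ring
      have hi1 : Integrable (fun ω => 2 * (N n ω * d n ω) + (d n ω) ^ 2) μ :=
        (((hNdint n).const_mul 2)).add (hsqint n)
      have : ∫ ω, (N (n + 1) ω) ^ 2 ∂μ =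
          ∫ ω, (N n ω) ^ 2 ∂μ + ∫ ω, (2 * (N n ω * d n ω) + (d n ω) ^ 2) ∂μ := by
        rw [← integral_add (hNsqint n) hi1]
        exact integral_congr_ae (Eventually.of_forall fun ω => hptw ω)
      rw [this, integral_add ((hNdint n).const_mul 2) (hsqint n),
        integral_const_mul, hcross n, mul_zero, zero_add]
      have hdsq : ∫ ω, (d n ω) ^ 2 ∂μ ≤ (2 * (H * η n)) ^ 2 := by
        have hb : ∀ᵐ ω ∂μ, (d n ω) ^ 2 ≤ (2 * (H * η n)) ^ 2 := by
          filter_upwards [hdbdd n] with ω hω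
          calc (d n ω) ^ 2 = |d n ω| ^ 2 := (sq_abs _).symm
            _ ≤ (2 * (H * η n)) ^ 2 :=
              pow_le_pow_left₀ (abs_nonneg _) hω 2
        calc ∫ ω, (d n ω) ^ 2 ∂μ ≤ ∫ _ω, (2 * (H * η n)) ^ 2 ∂μ :=
              integral_mono_ae (hsqint n) (integrable_const _) hb
          _ = (2 * (H * η n)) ^ 2 := by simp
      rw [Finset.sum_range_succ]
      exact add_le_add ih hdsq
  -- uniform L² bound
  set K : ℝ := (2 * H) ^ 2 * ∑' t, (η t) ^ 2 with hK
  have hL2' : ∀ n, ∫ ω, (N n ω) ^ 2 ∂μ ≤ K := by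
    intro n
    refine (hL2 n).trans ?_
    have : ∀ i, (2 * (H * η i)) ^ 2 = (2 * H) ^ 2 * (η i) ^ 2 := fun i => by ring
    simp_rw [this, ← Finset.mul_sum, hK]
    refine mul_le_mul_of_nonneg_left ?_ (by positivity)
    exact hsq.sum_le_tsum _ (fun i _ => sq_nonneg _)
  -- L¹ bound
  have hL1 : ∀ n, eLpNorm (N n) 1 μ ≤ ((K + 1) / 2).toNNReal := by
    intro n
    have habs : ∫ ω, |N n ω| ∂μ ≤ (K + 1) / 2 := by
      have hb : ∀ ω, |N n ω| ≤ ((N n ω) ^ 2 + 1) / 2 := by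
        intro ω
        nlinarith [sq_nonneg (|N n ω| - 1), sq_abs (N n ω)]
      calc ∫ ω, |N n ω| ∂μ ≤ ∫ ω, ((N n ω) ^ 2 + 1) / 2 ∂μ :=
            integral_mono ((hNmart.integrable n).abs)
              (((hNsqint n).add (integrable_const 1)).div_const 2)
              hb
        _ = (∫ ω, (N n ω) ^ 2 ∂μ + 1) / 2 := by
            rw [integral_div, integral_add (hNsqint n) (integrable_const 1)]
            simp
        _ ≤ (K + 1) / 2 := by linarith [hL2' n]
    have heq : eLpNorm (N n) 1 μ = ENNReal.ofReal (∫ ω, ‖N n ω‖ ∂μ) := by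
      rw [eLpNorm_one_eq_lintegral_enorm,
        ofReal_integral_norm_eq_lintegral_enorm (hNmart.integrable n)]
    have hco : (↑(((K + 1) / 2).toNNReal) : ENNReal) = ENNReal.ofReal ((K + 1) / 2) := rfl
    rw [heq, hco]
    exact ENNReal.ofReal_le_ofReal (by simpa [Real.norm_eq_abs] using habs)
  exact hNmart.submartingale.exists_ae_tendsto_of_bdd hL1

end aux

/-- If `M` is a super-martingale with `M 0 = 0` and differences bounded by `H * η t`,
where `η` is positive, square-summable, and `(∑_{s<t} η s)/√(log t) → ∞`, then almost surely
`limsupₜ Mₜ / (∑_{s<t} η s) ≤ 0`. -/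
theorem stmt2 {Ω : Type*} {mΩ : MeasurableSpace Ω} {μ : Measure Ω} [IsProbabilityMeasure μ]
    (𝒢 : Filtration ℕ mΩ) (M : ℕ → Ω → ℝ) (hM : Supermartingale M 𝒢 μ)
    (hM0 : ∀ ω, M 0 ω = 0)
    (H : ℝ) (hH : 0 < H) (η : ℕ → ℝ) (hηpos : ∀ t, 0 < η t)
    (hdiff : ∀ t, ∀ ω, |M (t + 1) ω - M t ω| ≤ H * η t)
    (hsq : Summable fun t => (η t) ^ 2)
    (hlog : Tendsto (fun t : ℕ => (∑ s ∈ Finset.range t, η s) / Real.sqrt (Real.log t))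
      atTop atTop) :
    ∀ᵐ ω ∂μ, Filter.limsup (fun t : ℕ => M t ω / ∑ s ∈ Finset.range t, η s) atTop ≤ 0 := by
  have hconv := aux_conv 𝒢 M hM hM0 H hH η hηpos hdiff hsq
  set S : ℕ → ℝ := fun t => ∑ s ∈ Finset.range t, η s with hSdef
  -- S tends to infinity
  have hsqrt1 : ∀ᶠ t : ℕ in atTop, 1 ≤ Real.sqrt (Real.log t) := by
    filter_upwards [eventually_ge_atTop 3] with t ht
    have h3 : (3 : ℝ) ≤ (t : ℝ) := by exact_mod_cast ht
    have hlog3 : (1 : ℝ) ≤ Real.log t := by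
      rw [Real.le_log_iff_exp_le (by linarith)]
      exact (Real.exp_one_lt_d9.le.trans (by norm_num)).trans h3
    calc (1:ℝ) = Real.sqrt 1 := Real.sqrt_one.symm
      _ ≤ Real.sqrt (Real.log t) := Real.sqrt_le_sqrt hlog3
  have hStop : Tendsto S atTop atTop := by
    rw [tendsto_atTop]
    intro b
    filter_upwards [hlog.eventually_ge_atTop (max b 0), hsqrt1] with t h1 h2
    have hs : 0 < Real.sqrt (Real.log t) := lt_of_lt_of_le one_pos h2
    have : max b 0 * Real.sqrt (Real.log t) ≤ S t := by
      rw [← le_div_iff₀ hs]; exact h1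
    calc b ≤ max b 0 := le_max_left _ _
      _ = max b 0 * 1 := (mul_one _).symm
      _ ≤ max b 0 * Real.sqrt (Real.log t) :=
          mul_le_mul_of_nonneg_left h2 (le_max_right _ _)
      _ ≤ S t := this
  have hSpos : ∀ t, 1 ≤ t → 0 < S t := by
    intro t ht
    refine Finset.sum_pos (fun i _ => hηpos i) ?_
    exact Finset.nonempty_range_iff.2 (by omega)
  -- predictable part is nonpositive
  have hterm : ∀ k, μ[M (k + 1) - M k|𝒢 k] ≤ᵐ[μ] 0 := by
    intro k
    have h1 : μ[M (k + 1) - M k|𝒢 k] =ᵐ[μ] μ[M (k + 1)|𝒢 k] - μ[M k|𝒢 k] :=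
      condExp_sub (hM.integrable (k + 1)) (hM.integrable k) (𝒢 k)
    have h2 : μ[M k|𝒢 k] = M k :=
      condExp_of_stronglyMeasurable (𝒢.le k) (hM.stronglyAdapted k) (hM.integrable k)
    have h3 : μ[M (k + 1)|𝒢 k] ≤ᵐ[μ] M k := hM.2.1 k (k + 1) (Nat.le_succ k)
    filter_upwards [h1, h3] with ω hω1 hω3
    rw [Pi.zero_apply, hω1, Pi.sub_apply, h2]
    exact sub_nonpos.2 hω3
  have hMN : ∀ᵐ ω ∂μ, ∀ n, M n ω ≤ martingalePart M 𝒢 μ n ω := by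
    rw [ae_all_iff]
    intro n
    have : ∀ᵐ ω ∂μ, predictablePart M 𝒢 μ n ω ≤ 0 := by
      filter_upwards [ae_all_iff.2 hterm] with ω hω
      simp only [predictablePart, Finset.sum_apply]
      exact Finset.sum_nonpos fun k _ => hω k
    filter_upwards [this] with ω hω
    have hsum : martingalePart M 𝒢 μ n ω + predictablePart M 𝒢 μ n ω = M n ω := by
      conv_rhs => rw [← martingalePart_add_predictablePart 𝒢 μ M]
      simp
    linarith
  -- conclusion
  filter_upwards [hconv, hMN] with ω hcex hle
  obtain ⟨c, hc⟩ := hcex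
  -- lower bound on M t ω
  have hlow : ∀ t, -(H * S t) ≤ M t ω := by
    intro t
    have habs : |M t ω| ≤ H * S t := by
      have : M t ω = ∑ s ∈ Finset.range t, (M (s + 1) ω - M s ω) := by
        rw [Finset.sum_range_sub (fun s => M s ω), hM0 ω, sub_zero]
      rw [this, hSdef, Finset.mul_sum]
      exact (Finset.abs_sum_le_sum_abs _ _).trans
        (Finset.sum_le_sum fun s _ => hdiff s ω)
    linarith [neg_abs_le (M t ω)]
  have hcb : IsCoboundedUnder (· ≤ ·) atTop (fun t : ℕ => M t ω / S t) := by
    refine isCoboundedUnder_le_of_eventually_le atTop (x := -H) ?_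
    filter_upwards [eventually_ge_atTop 1] with t ht
    have hS : 0 < S t := hSpos t ht
    rw [le_div_iff₀ hS]
    calc -H * S t = -(H * S t) := by ring
      _ ≤ M t ω := hlow t
  have key : ∀ ε : ℝ, 0 < ε → limsup (fun t : ℕ => M t ω / S t) atTop ≤ ε := by
    intro ε hε
    refine limsup_le_of_le hcb ?_
    have hev1 : ∀ᶠ t : ℕ in atTop, martingalePart M 𝒢 μ t ω < c + 1 :=
      hc.eventually_lt_const (lt_add_one c)
    filter_upwards [hev1, hStop.eventually_ge_atTop (max ((c + 1) / ε) 1),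
      eventually_ge_atTop 1] with t h1 h2 ht
    have hS : 0 < S t := hSpos t ht
    have hc1 : c + 1 ≤ ε * S t := by
      have : (c + 1) / ε ≤ S t := le_trans (le_max_left _ _) h2
      rw [div_le_iff₀ hε] at this
      linarith
    calc M t ω / S t ≤ martingalePart M 𝒢 μ t ω / S t :=
          div_le_div_of_nonneg_right (hle t) hS.le
      _ ≤ ε := by
          rw [div_le_iff₀ hS]
          linarith [h1]
  refine le_of_forall_pos_le_add fun ε hε => ?_
  simpa using key ε hε
end

section
/- Let (θ_t) be a Markov chain in ℝ^d and h: ℝ^d → [0,∞) with E[h²(θ_{t+1})|θ_t] ≤ h²(θ_t) − 2η_t[a·h²(θ_t) − b·h(θ_t)]𝟙(θ_t ∉ ∂Θ_t) + Dη_t², where a > 0, b ≥ 0, D ≥ 0. Fix β > 1 and set B = {θ : h(θ) ≤ βb/a}. Then Σ_{s=0}^{t-1} Y_{s+1}𝟙(θ_s ∈ ∂Θ_s^c ∩ B^c) is a super-martingale, where Y_{t+1} = h²(θ_{t+1}) − h²(θ_t) + 2η_t β(β−1)b²/a − Dη_t². -/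
open MeasureTheory Finset
open scoped Classical

private lemma stmt14_aux {a b β x : ℝ} (ha : 0 < a) (hb : 0 ≤ b) (hβ : 1 < β)
    (hx : β * b / a < x) : β * (β - 1) * b ^ 2 / a ≤ a * x ^ 2 - b * x := by
  rw [div_lt_iff₀ ha] at hx
  rw [div_le_iff₀ ha]
  nlinarith [mul_nonneg (sub_nonneg.2 hx.le) (by nlinarith : (0:ℝ) ≤ x * a + (β - 1) * b)]

/-- Lemma 5.1, first super-martingale. If the Markov chain `θ` satisfies the drift inequality
`E[h²(θ_{t+1})|θ_t] ≤ h²(θ_t) − 2η_t[a h²(θ_t) − b h(θ_t)]𝟙(θ_t ∉ bdry_t) + D η_t²`, then with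
`B = {θ : h θ ≤ β b / a}` and
`Y_{t+1} = h²(θ_{t+1}) − h²(θ_t) + 2η_t β(β−1)b²/a − Dη_t²`, the process
`∑_{s<t} Y_{s+1} 𝟙(θ_s ∈ bdry_s^c ∩ B^c)` is a super-martingale. -/
theorem stmt14 {Ω : Type*} {mΩ : MeasurableSpace Ω} {μ : Measure Ω} [IsProbabilityMeasure μ]
    {d : ℕ} (𝒢 : Filtration ℕ mΩ) (θ : ℕ → Ω → EuclideanSpace ℝ (Fin d))
    (hadapted : Adapted 𝒢 θ) (hmeas : ∀ t, Measurable (θ t))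
    (h : EuclideanSpace ℝ (Fin d) → ℝ) (hh : Measurable h) (hhnonneg : ∀ z, 0 ≤ h z)
    (R : ℝ) (hhbd : ∀ z, h z ≤ R)
    (bdry : ℕ → Set (EuclideanSpace ℝ (Fin d))) (hbdry : ∀ t, MeasurableSet (bdry t))
    (η : ℕ → ℝ) (hη : ∀ t, 0 < η t)
    (a b D β : ℝ) (ha : 0 < a) (hb : 0 ≤ b) (hD : 0 ≤ D) (hβ : 1 < β)
    (hdrift : ∀ t, ∀ᵐ ω ∂μ,
      (μ[fun ω' => h (θ (t + 1) ω') ^ 2 | 𝒢 t]) ω ≤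
        h (θ t ω) ^ 2 -
          2 * η t * (a * h (θ t ω) ^ 2 - b * h (θ t ω)) *
            (if θ t ω ∈ bdry t then 0 else 1) +
          D * η t ^ 2)
    (B : Set (EuclideanSpace ℝ (Fin d))) (hB : B = {z | h z ≤ β * b / a}) :
    Supermartingale
      (fun t ω => ∑ s ∈ Finset.range t,
        if θ s ω ∉ bdry s ∧ θ s ω ∉ B then
          h (θ (s + 1) ω) ^ 2 - h (θ s ω) ^ 2 + 2 * η s * β * (β - 1) * b ^ 2 / a -
            D * η s ^ 2
        else 0)
      𝒢 μ := by
  classical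
  -- notation
  set g : ℕ → Ω → ℝ := fun s ω =>
    h (θ (s + 1) ω) ^ 2 - h (θ s ω) ^ 2 + 2 * η s * β * (β - 1) * b ^ 2 / a - D * η s ^ 2
    with hg
  set A : ℕ → Set Ω := fun s => {ω | θ s ω ∉ bdry s ∧ θ s ω ∉ B} with hA
  have hBmeas : MeasurableSet B := by
    rw [hB]; exact measurableSet_le hh measurable_const
  have hθm : ∀ {s t : ℕ}, s ≤ t → Measurable[𝒢 t] (θ s) := fun {s t} hst =>
    ((hadapted s).mono (𝒢.mono hst) le_rfl)
  have hAmeas : ∀ {s t : ℕ}, s ≤ t → MeasurableSet[𝒢 t] (A s) := by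
    intro s t hst
    have : A s = θ s ⁻¹' ((bdry s)ᶜ ∩ Bᶜ) := by
      ext ω; simp [hA, Set.mem_preimage]
    rw [this]
    exact hθm hst (((hbdry s).compl).inter hBmeas.compl)
  have hAmeas' : ∀ s, MeasurableSet (A s) := fun s => 𝒢.le s _ (hAmeas le_rfl)
  -- the summand equals an indicator
  have hsummand : ∀ s (ω : Ω),
      (if θ s ω ∉ bdry s ∧ θ s ω ∉ B then g s ω else 0) = (A s).indicator (g s) ω := by
    intro s ω
    by_cases hp : θ s ω ∉ bdry s ∧ θ s ω ∉ B
    · rw [if_pos hp, Set.indicator_of_mem (show ω ∈ A s from hp)]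
    · rw [if_neg hp, Set.indicator_of_notMem (show ω ∉ A s from hp)]
  have hprocess : (fun t ω => ∑ s ∈ Finset.range t,
      if θ s ω ∉ bdry s ∧ θ s ω ∉ B then
        h (θ (s + 1) ω) ^ 2 - h (θ s ω) ^ 2 + 2 * η s * β * (β - 1) * b ^ 2 / a -
          D * η s ^ 2
      else 0)
      = fun t ω => ∑ s ∈ Finset.range t, (A s).indicator (g s) ω := by
    funext t ω
    exact Finset.sum_congr rfl fun s _ => hsummand s ω
  rw [hprocess]
  have hR : 0 ≤ R := (hhnonneg 0).trans (hhbd 0)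
  -- integrability of h(θ s)^2
  have hint2 : ∀ s, Integrable (fun ω => h (θ s ω) ^ 2) μ := by
    intro s
    refine (integrable_const (R ^ 2)).mono'
      ((hh.comp (hmeas s)).pow_const 2).aestronglyMeasurable (ae_of_all _ fun ω => ?_)
    rw [Real.norm_eq_abs, abs_of_nonneg (by positivity)]
    exact pow_le_pow_left₀ (hhnonneg _) (hhbd _) 2
  have hgint : ∀ s, Integrable (g s) μ := by
    intro s
    have := (((hint2 (s + 1)).sub (hint2 s)).add
      (integrable_const (2 * η s * β * (β - 1) * b ^ 2 / a))).sub
      (integrable_const (D * η s ^ 2))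
    exact this
  have hξint : ∀ s, Integrable ((A s).indicator (g s)) μ :=
    fun s => (hgint s).indicator (hAmeas' s)
  -- strong measurability
  have hgsm : ∀ s, StronglyMeasurable[𝒢 (s + 1)] (g s) := by
    intro s
    refine Measurable.stronglyMeasurable ?_
    exact ((((hh.comp (hθm le_rfl)).pow_const 2).sub
      ((hh.comp (hθm (Nat.le_succ s))).pow_const 2)).add_const _).sub_const _
  have hξsm : ∀ s, StronglyMeasurable[𝒢 (s + 1)] ((A s).indicator (g s)) :=
    fun s => (hgsm s).indicator (hAmeas (Nat.le_succ s))
  have hXsm : ∀ t, StronglyMeasurable[𝒢 t]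
      (fun ω => ∑ s ∈ Finset.range t, (A s).indicator (g s) ω) := by
    intro t
    refine Finset.stronglyMeasurable_fun_sum _ fun s hs => ?_
    exact (hξsm s).mono (𝒢.mono (Finset.mem_range.1 hs))
  have hXint : ∀ t, Integrable
      (fun ω => ∑ s ∈ Finset.range t, (A s).indicator (g s) ω) μ :=
    fun t => integrable_finset_sum _ fun s _ => hξint s
  -- key conditional expectation bound
  have hcondξ : ∀ s, μ[(A s).indicator (g s)|𝒢 s] ≤ᵐ[μ] 0 := by
    intro s
    have h1 : μ[(A s).indicator (g s)|𝒢 s] =ᵐ[μ] (A s).indicator (μ[g s|𝒢 s]) :=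
      condExp_indicator (hgint s) (hAmeas le_rfl)
    -- decompose g s
    set G : Ω → ℝ := fun ω =>
      -h (θ s ω) ^ 2 + 2 * η s * β * (β - 1) * b ^ 2 / a - D * η s ^ 2 with hG
    have hGsm : StronglyMeasurable[𝒢 s] G := by
      refine Measurable.stronglyMeasurable ?_
      exact (((hh.comp (hθm le_rfl)).pow_const 2).neg.add_const _).sub_const _
    have hGint : Integrable G μ := by
      have := ((hint2 s).neg.add (integrable_const (2 * η s * β * (β - 1) * b ^ 2 / a))).sub
        (integrable_const (D * η s ^ 2))
      exact this
    have h2 : μ[g s|𝒢 s] =ᵐ[μ]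
        fun ω => (μ[fun ω' => h (θ (s + 1) ω') ^ 2|𝒢 s]) ω + G ω := by
      have he : g s =ᵐ[μ] (fun ω' => h (θ (s + 1) ω') ^ 2) + G :=
        ae_of_all _ fun ω => by simp only [hg, hG, Pi.add_apply]; ring
      calc μ[g s|𝒢 s] =ᵐ[μ] μ[(fun ω' => h (θ (s + 1) ω') ^ 2) + G|𝒢 s] :=
            condExp_congr_ae he
        _ =ᵐ[μ] μ[fun ω' => h (θ (s + 1) ω') ^ 2|𝒢 s] + μ[G|𝒢 s] :=
            condExp_add (hint2 (s + 1)) hGint _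
        _ =ᵐ[μ] fun ω => (μ[fun ω' => h (θ (s + 1) ω') ^ 2|𝒢 s]) ω + G ω := by
            rw [condExp_of_stronglyMeasurable (𝒢.le s) hGsm hGint]
            exact ae_of_all _ fun ω => rfl
    filter_upwards [h1, h2, hdrift s] with ω hω1 hω2 hω3
    rw [Pi.zero_apply, hω1]
    by_cases hmem : ω ∈ A s
    · rw [Set.indicator_of_mem hmem, hω2]
      obtain ⟨hnb, hnB⟩ := hmem
      rw [if_neg hnb, mul_one] at hω3
      have hx : β * b / a < h (θ s ω) := by
        rw [hB] at hnB
        exact lt_of_not_ge hnB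
      have haux := stmt14_aux ha hb hβ hx
      have h2η : (0:ℝ) ≤ 2 * η s := by linarith [hη s]
      have := mul_le_mul_of_nonneg_left haux h2η
      simp only [hG]
      have heq : 2 * η s * (β * (β - 1) * b ^ 2 / a) = 2 * η s * β * (β - 1) * b ^ 2 / a := by
        ring
      rw [heq] at this
      linarith
    · rw [Set.indicator_of_notMem hmem]
  -- assemble
  refine supermartingale_nat (fun t => hXsm t) hXint fun t => ?_
  have hsplit : (fun ω => ∑ s ∈ Finset.range (t + 1), (A s).indicator (g s) ω)
      = (fun ω => ∑ s ∈ Finset.range t, (A s).indicator (g s) ω) + (A t).indicator (g t) := by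
    funext ω
    simp [Finset.sum_range_succ]
  calc μ[fun ω => ∑ s ∈ Finset.range (t + 1), (A s).indicator (g s) ω|𝒢 t]
      =ᵐ[μ] μ[(fun ω => ∑ s ∈ Finset.range t, (A s).indicator (g s) ω)
          + (A t).indicator (g t)|𝒢 t] := by rw [hsplit]
    _ =ᵐ[μ] μ[fun ω => ∑ s ∈ Finset.range t, (A s).indicator (g s) ω|𝒢 t]
          + μ[(A t).indicator (g t)|𝒢 t] := condExp_add (hXint t) (hξint t) _
    _ =ᵐ[μ] (fun ω => ∑ s ∈ Finset.range t, (A s).indicator (g s) ω)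
          + μ[(A t).indicator (g t)|𝒢 t] := by
        rw [condExp_of_stronglyMeasurable (𝒢.le t) (hXsm t) (hXint t)]
    _ ≤ᵐ[μ] fun ω => ∑ s ∈ Finset.range t, (A s).indicator (g s) ω := by
        filter_upwards [hcondξ t] with ω hω
        simpa using hω
end

section
/- Under the same setting, Σ_{s=0}^{t-1} Z_{s+1}𝟙(θ_s ∈ ∂Θ_s ∪ B) is a super-martingale, where Z_{t+1} = h²(θ_{t+1}) − h²(θ_t) − η_t b²/(2a) − Dη_t², provided additionally that E[h²(θ_{t+1})|θ_t] = h²(θ_t) whenever θ_t ∈ ∂Θ_t. -/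
open MeasureTheory Finset
open scoped Classical

/-- Lemma 5.1, second super-martingale. Under the drift inequality
`E[h²(θ_{t+1})|θ_t] ≤ h²(θ_t) − 2η_t[a h²(θ_t) − b h(θ_t)]𝟙(θ_t ∉ ∂Θ_t) + D η_t²`, and
assuming `E[h²(θ_{t+1})|θ_t] = h²(θ_t)` whenever `θ_t ∈ ∂Θ_t`, with
`B = {θ : h θ ≤ β b / a}` and `Z_{t+1} = h²(θ_{t+1}) − h²(θ_t) − η_t b²/(2a) − Dη_t²`,
the process `∑_{s<t} Z_{s+1} 𝟙(θ_s ∈ ∂Θ_s ∪ B)` is a super-martingale. -/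
theorem stmt15 {Ω : Type*} {mΩ : MeasurableSpace Ω} {μ : Measure Ω} [IsProbabilityMeasure μ]
    {d : ℕ} (𝒢 : Filtration ℕ mΩ) (θ : ℕ → Ω → EuclideanSpace ℝ (Fin d))
    (hadapted : Adapted 𝒢 θ) (hmeas : ∀ t, Measurable (θ t))
    (h : EuclideanSpace ℝ (Fin d) → ℝ) (hh : Measurable h) (hhnonneg : ∀ z, 0 ≤ h z)
    (R : ℝ) (hhbd : ∀ z, h z ≤ R)
    (bdry : ℕ → Set (EuclideanSpace ℝ (Fin d))) (hbdry : ∀ t, MeasurableSet (bdry t))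
    (η : ℕ → ℝ) (hη : ∀ t, 0 < η t)
    (a b D β : ℝ) (ha : 0 < a) (hb : 0 ≤ b) (hD : 0 ≤ D) (hβ : 1 < β)
    (hdrift : ∀ t, ∀ᵐ ω ∂μ,
      (μ[fun ω' => h (θ (t + 1) ω') ^ 2 | 𝒢 t]) ω ≤
        h (θ t ω) ^ 2 -
          2 * η t * (a * h (θ t ω) ^ 2 - b * h (θ t ω)) *
            (if θ t ω ∈ bdry t then 0 else 1) +
          D * η t ^ 2)
    (hstay : ∀ t, ∀ᵐ ω ∂μ, θ t ω ∈ bdry t →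
      (μ[fun ω' => h (θ (t + 1) ω') ^ 2 | 𝒢 t]) ω = h (θ t ω) ^ 2)
    (B : Set (EuclideanSpace ℝ (Fin d))) (hB : B = {z | h z ≤ β * b / a}) :
    Supermartingale
      (fun t ω => ∑ s ∈ Finset.range t,
        if θ s ω ∈ bdry s ∨ θ s ω ∈ B then
          h (θ (s + 1) ω) ^ 2 - h (θ s ω) ^ 2 - η s * b ^ 2 / (2 * a) - D * η s ^ 2
        else 0)
      𝒢 μ := by
  have hBm : MeasurableSet B := by
    rw [hB]; exact hh measurableSet_Iic
  -- the summand
  set g : ℕ → Ω → ℝ := fun s ω =>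
    if θ s ω ∈ bdry s ∨ θ s ω ∈ B then
      h (θ (s + 1) ω) ^ 2 - h (θ s ω) ^ 2 - η s * b ^ 2 / (2 * a) - D * η s ^ 2
    else 0 with hg
  have hcondmeas : ∀ s, MeasurableSet[𝒢 s] {ω | θ s ω ∈ bdry s ∨ θ s ω ∈ B} := by
    intro s
    have : {ω | θ s ω ∈ bdry s ∨ θ s ω ∈ B} = θ s ⁻¹' (bdry s ∪ B) := rfl
    rw [this]
    exact (hadapted s) ((hbdry s).union hBm)
  have hgmeas : ∀ s, StronglyMeasurable[𝒢 (s + 1)] (g s) := by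
    intro s
    apply Measurable.stronglyMeasurable
    refine Measurable.ite (𝒢.mono (Nat.le_succ s) _ (hcondmeas s)) ?_ measurable_const
    have h1 : Measurable[𝒢 (s + 1)] fun ω => h (θ (s + 1) ω) ^ 2 :=
      ((hh.comp (hadapted (s + 1))).pow_const 2)
    have h2 : Measurable[𝒢 (s + 1)] fun ω => h (θ s ω) ^ 2 :=
      ((hh.comp ((hadapted s).mono (𝒢.mono (Nat.le_succ s)) le_rfl)).pow_const 2)
    exact ((h1.sub h2).sub measurable_const).sub measurable_const
  have hgmeas0 : ∀ s, Measurable (g s) := fun s =>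
    ((hgmeas s).measurable.mono (𝒢.le (s + 1)) le_rfl)
  have hsq : ∀ s ω, ‖h (θ s ω) ^ 2‖ ≤ R ^ 2 := by
    intro s ω
    rw [Real.norm_of_nonneg (sq_nonneg _)]
    exact pow_le_pow_left₀ (hhnonneg _) (hhbd _) 2
  have hgint : ∀ s, Integrable (g s) μ := by
    intro s
    refine Integrable.mono' (integrable_const
      (R ^ 2 + R ^ 2 + |η s * b ^ 2 / (2 * a)| + |D * η s ^ 2|))
      (hgmeas0 s).aestronglyMeasurable (Filter.Eventually.of_forall fun ω => ?_)
    simp only [hg]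
    split
    · have h1 := hsq (s + 1) ω
      have h2 := hsq s ω
      rw [Real.norm_of_nonneg (sq_nonneg _)] at h1 h2
      rw [Real.norm_eq_abs, abs_le]
      have e1 := sq_nonneg (h (θ (s + 1) ω))
      have e2 := sq_nonneg (h (θ s ω))
      have e3 := le_abs_self (η s * b ^ 2 / (2 * a))
      have e4 := neg_abs_le (η s * b ^ 2 / (2 * a))
      have e5 := le_abs_self (D * η s ^ 2)
      have e6 := neg_abs_le (D * η s ^ 2)
      constructor <;> linarith
    · simp only [norm_zero]
      positivity
  -- the partial sums
  have hadp : StronglyAdapted 𝒢 (fun t ω => ∑ s ∈ Finset.range t, g s ω) := by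
    intro t
    apply Finset.stronglyMeasurable_fun_sum
    intro s hs
    exact (hgmeas s).mono (𝒢.mono (Finset.mem_range.mp hs))
  have hint : ∀ t, Integrable (fun ω => ∑ s ∈ Finset.range t, g s ω) μ :=
    fun t => integrable_finset_sum _ fun s _ => hgint s
  refine supermartingale_nat hadp hint fun t => ?_
  -- decompose g t = ind * H + dfn
  set ind : Ω → ℝ := fun ω => if θ t ω ∈ bdry t ∨ θ t ω ∈ B then 1 else 0 with hind
  set dfn : Ω → ℝ := fun ω =>
    if θ t ω ∈ bdry t ∨ θ t ω ∈ B then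
      -(h (θ t ω) ^ 2 + η t * b ^ 2 / (2 * a) + D * η t ^ 2) else 0 with hdfn
  set H : Ω → ℝ := fun ω => h (θ (t + 1) ω) ^ 2 with hH
  have hdecomp : g t = ind * H + dfn := by
    funext ω
    simp only [hg, hind, hdfn, hH, Pi.add_apply, Pi.mul_apply]
    split <;> ring
  have hindm : StronglyMeasurable[𝒢 t] ind :=
    (Measurable.ite (hcondmeas t) measurable_const measurable_const).stronglyMeasurable
  have hdfnm : StronglyMeasurable[𝒢 t] dfn := by
    apply Measurable.stronglyMeasurable
    refine Measurable.ite (hcondmeas t) ?_ measurable_const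
    exact (((hh.comp (hadapted t)).pow_const 2).add measurable_const).add
      measurable_const |>.neg
  have hHint : Integrable H μ :=
    Integrable.mono' (integrable_const (R ^ 2))
      ((hh.comp (hmeas (t + 1))).pow_const 2).aestronglyMeasurable
      (Filter.Eventually.of_forall fun ω => hsq (t + 1) ω)
  have hdfnint : Integrable dfn μ := by
    refine Integrable.mono' (integrable_const
      (R ^ 2 + |η t * b ^ 2 / (2 * a)| + |D * η t ^ 2|))
      (hdfnm.mono (𝒢.le t)).aestronglyMeasurable (Filter.Eventually.of_forall fun ω => ?_)
    simp only [hdfn]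
    split
    · rw [norm_neg]
      have h2 := hsq t ω
      rw [Real.norm_of_nonneg (sq_nonneg _)] at h2
      rw [Real.norm_eq_abs, abs_le]
      have e2 := sq_nonneg (h (θ t ω))
      have e3 := le_abs_self (η t * b ^ 2 / (2 * a))
      have e4 := neg_abs_le (η t * b ^ 2 / (2 * a))
      have e5 := le_abs_self (D * η t ^ 2)
      have e6 := neg_abs_le (D * η t ^ 2)
      constructor <;> linarith
    · simp only [norm_zero]; positivity
  have hindHint : Integrable (ind * H) μ := by
    refine Integrable.mono' hHint
      ((hindm.mono (𝒢.le t)).aestronglyMeasurable.mul hHint.aestronglyMeasurable)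
      (Filter.Eventually.of_forall fun ω => ?_)
    simp only [Pi.mul_apply, hind, hH]
    split
    · rw [one_mul, Real.norm_of_nonneg (sq_nonneg _)]
    · rw [zero_mul, norm_zero]
      positivity
  have hgtint : Integrable (g t) μ := hgint t
  -- conditional expectation computation
  have hce : μ[g t | 𝒢 t] =ᵐ[μ] fun ω => ind ω * (μ[H | 𝒢 t]) ω + dfn ω := by
    calc μ[g t | 𝒢 t] = μ[ind * H + dfn | 𝒢 t] := by rw [hdecomp]
      _ =ᵐ[μ] μ[ind * H | 𝒢 t] + μ[dfn | 𝒢 t] := condExp_add hindHint hdfnint _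
      _ =ᵐ[μ] ind * μ[H | 𝒢 t] + dfn := by
          refine Filter.EventuallyEq.add
            (condExp_mul_of_stronglyMeasurable_left hindm hindHint hHint) ?_
          rw [condExp_of_stronglyMeasurable (𝒢.le t) hdfnm hdfnint]
      _ = fun ω => ind ω * (μ[H | 𝒢 t]) ω + dfn ω := rfl
  -- the key inequality
  have hkey : ∀ᵐ ω ∂μ, ind ω * (μ[H | 𝒢 t]) ω + dfn ω ≤ 0 := by
    filter_upwards [hdrift t, hstay t] with ω hd hs
    simp only [hind, hdfn]
    by_cases hc : θ t ω ∈ bdry t ∨ θ t ω ∈ B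
    · simp only [hc, if_true, one_mul]
      by_cases hbd : θ t ω ∈ bdry t
      · have heq := hs hbd
        simp only [hH]
        rw [heq]
        have h1 : 0 ≤ η t * b ^ 2 / (2 * a) :=
          div_nonneg (mul_nonneg (hη t).le (sq_nonneg b)) (by linarith)
        have h2 : 0 ≤ D * η t ^ 2 := by positivity
        linarith
      · simp only [hbd, if_false, mul_one] at hd
        have h2a : (0:ℝ) < 2 * a := by linarith
        have key : -(2 * η t * (a * h (θ t ω) ^ 2 - b * h (θ t ω))) ≤ η t * b ^ 2 / (2 * a) := by
          rw [le_div_iff₀ h2a]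
          nlinarith [mul_nonneg (hη t).le (sq_nonneg (2 * a * h (θ t ω) - b))]
        simp only [hH]
        nlinarith [hd]
    · simp [hc]
  -- conclude
  have hft : μ[fun ω => ∑ s ∈ Finset.range t, g s ω | 𝒢 t]
      = fun ω => ∑ s ∈ Finset.range t, g s ω :=
    condExp_of_stronglyMeasurable (𝒢.le t) (hadp t) (hint t)
  have hsplit : (fun ω => ∑ s ∈ Finset.range (t + 1), g s ω)
      = (fun ω => ∑ s ∈ Finset.range t, g s ω) + g t := by
    funext ω; simp [Finset.sum_range_succ]
  calc μ[fun ω => ∑ s ∈ Finset.range (t + 1), g s ω | 𝒢 t]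
      = μ[(fun ω => ∑ s ∈ Finset.range t, g s ω) + g t | 𝒢 t] := by rw [hsplit]
    _ =ᵐ[μ] μ[fun ω => ∑ s ∈ Finset.range t, g s ω | 𝒢 t] + μ[g t | 𝒢 t] :=
        condExp_add (hint t) hgtint _
    _ =ᵐ[μ] (fun ω => ∑ s ∈ Finset.range t, g s ω) + μ[g t | 𝒢 t] := by rw [hft]
    _ ≤ᵐ[μ] fun ω => ∑ s ∈ Finset.range t, g s ω := by
        filter_upwards [hce, hkey] with ω h1 h2
        simp only [Pi.add_apply]
        have : (μ[g t | 𝒢 t]) ω ≤ 0 := h1 ▸ h2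
        linarith
end
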